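/- Let (Z_k)_{k=0,1,…,K} be a sequence of integrable real random variables adapted to a filtration (F_k), with Z_0 deterministic (constant). Set Y_k := Z_k − Z_{k−1} for k ≥ 1 and suppose Y_k ≤ 1 almost surely for all k, and that for some 0 < α < 1 and all k = 1,…,K one has E[Y_k | F_{k−1}] ≤ −α·E[Y_k² | F_{k−1}] almost surely. Then for every t ≥ 0, P[Z_K − Z_0 > t] ≤ exp(−α t). -/

import Mathlib

open MeasureTheory

lemma exp_le_one_add_add_sq {x : ℝ} (hx : x ≤ 1) : Real.exp x ≤ 1 + x + x ^ 2 := by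
  rcases le_total (-1) x with h | h
  · have hb := Real.exp_bound (x := x) (abs_le.2 ⟨h, hx⟩) (n := 2) (by norm_num)
    rw [show (∑ i ∈ Finset.range 2, x ^ i / (Nat.factorial i : ℝ)) = 1 + x by
      simp [Finset.sum_range_succ, Nat.factorial]] at hb
    norm_num [Nat.factorial] at hb
    have h2 := (abs_le.1 hb).2
    have := sq_abs x
    nlinarith [sq_nonneg x]
  · have h1 : Real.exp x ≤ 1 := Real.exp_le_one_iff.2 (by linarith)
    nlinarith [sq_nonneg x]

/-- **Freedman-type martingale inequality (Lemma 2.2).**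
Let `(Z_k)_{k=0,…,K}` be integrable random variables adapted to a filtration `(ℱ_k)`,
with `Z_0` almost surely constant. Set `Y_k := Z_k − Z_{k−1}` and suppose `Y_k ≤ 1`
almost surely, `Y_k²` is integrable, and `E[Y_k | ℱ_{k−1}] ≤ −α·E[Y_k² | ℱ_{k−1}]`
almost surely for all `1 ≤ k ≤ K`, where `0 < α < 1`. Then for all `t ≥ 0`,
`P[Z_K − Z_0 > t] ≤ exp(−α t)`. -/
theorem freedman_type_inequality {Ω : Type*} {m : MeasurableSpace Ω} (μ : Measure Ω)
    [IsProbabilityMeasure μ] (K : ℕ) (ℱ : Filtration ℕ m) (Z : ℕ → Ω → ℝ)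
    (hadp : Adapted ℱ Z) (hint : ∀ k, Integrable (Z k) μ)
    (hint2 : ∀ k, 1 ≤ k → k ≤ K → Integrable (fun ω => (Z k ω - Z (k - 1) ω) ^ 2) μ)
    (hZ0 : ∃ c : ℝ, ∀ᵐ ω ∂μ, Z 0 ω = c)
    (hY1 : ∀ k, 1 ≤ k → k ≤ K → ∀ᵐ ω ∂μ, Z k ω - Z (k - 1) ω ≤ 1)
    (α : ℝ) (hα0 : 0 < α) (hα1 : α < 1)
    (hdrift : ∀ k, 1 ≤ k → k ≤ K →
      μ[fun ω => Z k ω - Z (k - 1) ω | ℱ (k - 1)] ≤ᵐ[μ]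
        fun ω => -α * (μ[fun ω' => (Z k ω' - Z (k - 1) ω') ^ 2 | ℱ (k - 1)]) ω)
    (t : ℝ) (ht : 0 ≤ t) :
    (μ {ω | t < Z K ω - Z 0 ω}).toReal ≤ Real.exp (-α * t) := by
  have hm : ∀ i, ℱ i ≤ m := fun i => ℱ.le i
  have hZmeas : ∀ k, Measurable (Z k) := fun k =>
    ((hadp k).mono (hm k) le_rfl)
  set W : ℕ → Ω → ℝ := fun k ω => Real.exp (α * (Z k ω - Z 0 ω)) with hW
  have hWmeas : ∀ k, Measurable (W k) := fun k =>
    (Real.measurable_exp.comp (((hZmeas k).sub (hZmeas 0)).const_mul α))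
  -- a.e. bound on Z k - Z 0
  have hbd : ∀ k, k ≤ K → ∀ᵐ ω ∂μ, Z k ω - Z 0 ω ≤ (k : ℝ) := by
    intro k hk
    induction k with
    | zero => filter_upwards with ω; simp
    | succ n ih =>
      have h1 := hY1 (n + 1) (Nat.le_add_left 1 n) hk
      have h2 := ih (Nat.le_of_succ_le hk)
      filter_upwards [h1, h2] with ω hω1 hω2
      have : Z (n + 1 - 1) ω = Z n ω := rfl
      push_cast
      rw [this] at hω1
      linarith
  have hWint : ∀ k, k ≤ K → Integrable (W k) μ := by
    intro k hk
    refine Integrable.mono' (integrable_const (Real.exp (α * k)))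
      (hWmeas k).aestronglyMeasurable ?_
    filter_upwards [hbd k hk] with ω hω
    rw [Real.norm_eq_abs, abs_of_pos (Real.exp_pos _)]
    exact Real.exp_le_exp.2 (mul_le_mul_of_nonneg_left hω hα0.le)
  -- per-step conditional bound
  have step : ∀ k, 1 ≤ k → k ≤ K →
      μ[(fun ω => Real.exp (α * (Z k ω - Z (k - 1) ω))) | ℱ (k - 1)] ≤ᵐ[μ]
        fun _ => (1 : ℝ) := by
    intro k hk1 hk
    set Y : Ω → ℝ := fun ω => Z k ω - Z (k - 1) ω with hY
    set Y2 : Ω → ℝ := fun ω => (Z k ω - Z (k - 1) ω) ^ 2 with hY2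
    have hYint : Integrable Y μ := (hint k).sub (hint (k - 1))
    have hY2int : Integrable Y2 μ := hint2 k hk1 hk
    have hEmeas : Measurable fun ω => Real.exp (α * Y ω) :=
      Real.measurable_exp.comp (((hZmeas k).sub (hZmeas (k - 1))).const_mul α)
    have hEint : Integrable (fun ω => Real.exp (α * Y ω)) μ := by
      refine Integrable.mono' (integrable_const (Real.exp α))
        hEmeas.aestronglyMeasurable ?_
      filter_upwards [hY1 k hk1 hk] with ω hω
      rw [Real.norm_eq_abs, abs_of_pos (Real.exp_pos _)]
      have hYω : Y ω ≤ 1 := hω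
      exact Real.exp_le_exp.2 (by nlinarith [mul_le_mul_of_nonneg_left hYω hα0.le])
    set G : Ω → ℝ := fun ω => 1 + α * Y ω + α ^ 2 * Y2 ω with hG
    have hGint : Integrable G μ :=
      ((integrable_const (1 : ℝ)).add (hYint.const_mul α)).add (hY2int.const_mul (α ^ 2))
    have hEG : (fun ω => Real.exp (α * Y ω)) ≤ᵐ[μ] G := by
      filter_upwards [hY1 k hk1 hk] with ω hω
      have hYω : Y ω ≤ 1 := hω
      have hx : α * Y ω ≤ 1 := by nlinarith [mul_le_mul_of_nonneg_left hYω hα0.le]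
      have := exp_le_one_add_add_sq hx
      have h2 : Y2 ω = Y ω ^ 2 := rfl
      calc Real.exp (α * Y ω) ≤ 1 + α * Y ω + (α * Y ω) ^ 2 := this
        _ = 1 + α * Y ω + α ^ 2 * Y2 ω := by rw [h2]; ring
    have hmono := condExp_mono (m := ℱ (k - 1)) hEint hGint hEG
    -- decompose conditional expectation of G
    have hGdec : μ[G | ℱ (k - 1)] =ᵐ[μ]
        fun ω => 1 + α * (μ[Y | ℱ (k - 1)]) ω + α ^ 2 * (μ[Y2 | ℱ (k - 1)]) ω := by
      have e1 : G = (fun _ => (1 : ℝ)) + ((α • Y) + (α ^ 2 • Y2)) := by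
        funext ω
        simp [hG, smul_eq_mul]
        ring
      rw [e1]
      refine (condExp_add (integrable_const 1) ((hYint.smul α).add (hY2int.smul (α ^ 2))) (ℱ (k - 1))).trans ?_
      have h1 : μ[(fun _ => (1 : ℝ)) | ℱ (k - 1)] = fun _ => (1 : ℝ) :=
        condExp_const (hm (k - 1)) 1
      have h2 : μ[(α • Y) + (α ^ 2 • Y2) | ℱ (k - 1)] =ᵐ[μ]
          μ[α • Y | ℱ (k - 1)] + μ[α ^ 2 • Y2 | ℱ (k - 1)] :=
        condExp_add (hYint.smul α) (hY2int.smul (α ^ 2)) (ℱ (k - 1))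
      have h3 : μ[α • Y | ℱ (k - 1)] =ᵐ[μ] α • μ[Y | ℱ (k - 1)] := condExp_smul α Y (ℱ (k - 1))
      have h4 : μ[α ^ 2 • Y2 | ℱ (k - 1)] =ᵐ[μ] α ^ 2 • μ[Y2 | ℱ (k - 1)] :=
        condExp_smul (α ^ 2) Y2 (ℱ (k - 1))
      filter_upwards [h2, h3, h4] with ω hω2 hω3 hω4
      simp only [Pi.add_apply, h1, Pi.smul_apply, smul_eq_mul] at *
      rw [hω2, hω3, hω4]
      ring
    have hdr := hdrift k hk1 hk
    filter_upwards [hmono, hGdec, hdr] with ω h1 h2 h3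
    rw [h2] at h1
    simp only [hY, hY2] at *
    nlinarith [h1, h3, mul_le_mul_of_nonneg_left h3 hα0.le]
  -- induction: ∫ W k ≤ 1
  have key : ∀ k, k ≤ K → ∫ ω, W k ω ∂μ ≤ 1 := by
    intro k hk
    induction k with
    | zero => simp [hW]
    | succ n ih =>
      have hnK : n ≤ K := Nat.le_of_succ_le hk
      have ihn := ih hnK
      set E : Ω → ℝ := fun ω => Real.exp (α * (Z (n + 1) ω - Z n ω)) with hE
      have hWeq : W (n + 1) = W n * E := by
        funext ω
        simp only [hW, hE, Pi.mul_apply, ← Real.exp_add]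
        ring_nf
      have hWn_sm : StronglyMeasurable[ℱ n] (W n) := by
        have hz0 : StronglyMeasurable[ℱ n] (Z 0) := ((hadp 0).mono (ℱ.mono (Nat.zero_le n)) le_rfl).stronglyMeasurable
        exact Real.continuous_exp.comp_stronglyMeasurable (((hadp n).stronglyMeasurable.sub hz0).const_mul α)
      have hprod : Integrable (W n * E) μ := hWeq ▸ hWint (n + 1) hk
      have hEint : Integrable E μ := by
        refine Integrable.mono' (integrable_const (Real.exp α))
          (Real.measurable_exp.comp (((hZmeas (n+1)).sub (hZmeas n)).const_mul α)).aestronglyMeasurable ?_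
        filter_upwards [hY1 (n + 1) (Nat.le_add_left 1 n) hk] with ω hω
        rw [Real.norm_eq_abs, abs_of_pos (Real.exp_pos _)]
        have : Z (n + 1 - 1) ω = Z n ω := rfl
        rw [this] at hω
        exact Real.exp_le_exp.2 (by nlinarith)
      have hstep := step (n + 1) (Nat.le_add_left 1 n) hk
      have hstep' : μ[E | ℱ n] ≤ᵐ[μ] fun _ => (1 : ℝ) := hstep
      have hpull : μ[W n * E | ℱ n] =ᵐ[μ] W n * μ[E | ℱ n] :=
        condExp_mul_of_stronglyMeasurable_left hWn_sm hprod hEint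
      have hWnbd : ∀ᵐ ω ∂μ, ‖W n ω‖ ≤ Real.exp (α * n) := by
        filter_upwards [hbd n hnK] with ω hω
        rw [Real.norm_eq_abs, abs_of_pos (Real.exp_pos _)]
        exact Real.exp_le_exp.2 (mul_le_mul_of_nonneg_left hω hα0.le)
      have hWcond_int : Integrable (fun ω => W n ω * (μ[E | ℱ n]) ω) μ :=
        integrable_condExp.bdd_mul (hWmeas n).aestronglyMeasurable hWnbd
      calc ∫ ω, W (n + 1) ω ∂μ = ∫ ω, (W n * E) ω ∂μ := by rw [hWeq]
        _ = ∫ ω, (μ[W n * E | ℱ n]) ω ∂μ := (integral_condExp (hm n)).symm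
        _ = ∫ ω, W n ω * (μ[E | ℱ n]) ω ∂μ := integral_congr_ae hpull
        _ ≤ ∫ ω, W n ω ∂μ := by
            refine integral_mono_ae hWcond_int (hWint n hnK) ?_
            filter_upwards [hstep'] with ω hω
            calc W n ω * (μ[E | ℱ n]) ω ≤ W n ω * 1 :=
                  mul_le_mul_of_nonneg_left hω (Real.exp_pos _).le
              _ = W n ω := mul_one _
        _ ≤ 1 := ihn
  -- Markov
  set s : Set Ω := {ω | t < Z K ω - Z 0 ω} with hs
  have hsm : MeasurableSet s := measurableSet_lt measurable_const ((hZmeas K).sub (hZmeas 0))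
  have h1 : Real.exp (α * t) * (μ s).toReal ≤ ∫ ω in s, W K ω ∂μ := by
    refine setIntegral_ge_of_const_le_real hsm (measure_ne_top μ s) ?_ ((hWint K le_rfl).integrableOn)
    intro ω hω
    exact Real.exp_le_exp.2 (mul_le_mul_of_nonneg_left (le_of_lt hω) hα0.le)
  have h2 : ∫ ω in s, W K ω ∂μ ≤ ∫ ω, W K ω ∂μ :=
    setIntegral_le_integral (hWint K le_rfl) (Filter.Eventually.of_forall fun ω => (Real.exp_pos _).le)
  have h3 := key K le_rfl
  have hexp : (0 : ℝ) < Real.exp (α * t) := Real.exp_pos _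
  have h4 : Real.exp (α * t) * (μ s).toReal ≤ 1 := le_trans h1 (le_trans h2 h3)
  rw [neg_mul, Real.exp_neg, inv_eq_one_div, le_div_iff₀ hexp]
  linarith [h4, mul_comm (Real.exp (α * t)) ((μ s).toReal)]
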